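/- Suppose f : ℝ → ℝ satisfies P_f(δ) ≠ ∅ for all δ ∈ ℝ, and let r_min be a proximal selection. For L ∈ (1, ∞): r_min is L-Lipschitz continuous if and only if f is L/(L−1)-weakly convex. Moreover r_min is 1-Lipschitz if and only if f is convex. -/
import Mathlib

/-- Rewriting of the proximal selection property: `rmin δ` minimizes
`f r + r²/2 - δ r`. -/
private lemma prox_key (f rmin : ℝ → ℝ)
    (hsel : ∀ δ : ℝ, ∀ r' : ℝ,
      (δ - rmin δ) ^ 2 / 2 + f (rmin δ) ≤ (δ - r') ^ 2 / 2 + f r') :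
    ∀ δ s : ℝ, f (rmin δ) + (rmin δ)^2/2 - δ * rmin δ ≤ f s + s^2/2 - δ * s := by
  intro δ s
  nlinarith [hsel δ s]

private lemma convexOn_const_mul (c : ℝ) (hc : 0 ≤ c) (g : ℝ → ℝ)
    (h : ConvexOn ℝ Set.univ g) : ConvexOn ℝ Set.univ (fun x => c * g x) := by
  refine ⟨convex_univ, fun x _ y _ a b ha hb hab => ?_⟩
  have h2 := h.2 (Set.mem_univ x) (Set.mem_univ y) ha hb hab
  simp only [smul_eq_mul] at h2 ⊢
  nlinarith [mul_le_mul_of_nonneg_left h2 hc]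

/-- A function with a supporting line at every point is convex. -/
private lemma convexOn_of_support (H g : ℝ → ℝ)
    (h : ∀ r s : ℝ, H r + g r * (s - r) ≤ H s) : ConvexOn ℝ Set.univ H := by
  refine ⟨convex_univ, fun x _ y _ a b ha hb hab => ?_⟩
  simp only [smul_eq_mul]
  have h1 := h (a*x + b*y) x
  have h2 := h (a*x + b*y) y
  have hz : g (a*x+b*y) * (a*(x - (a*x+b*y))) + g (a*x+b*y) * (b*(y - (a*x+b*y))) = 0 := by
    linear_combination (-(a*x+b*y) * g (a*x+b*y)) * hab
  have hHz : a * H (a*x+b*y) + b * H (a*x+b*y) = H (a*x+b*y) := by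
    linear_combination H (a*x+b*y) * hab
  nlinarith [mul_le_mul_of_nonneg_left h1 ha, mul_le_mul_of_nonneg_left h2 hb, hz, hHz]

/-- Bootstrapping: approximate supporting lines with a monotone slope selection
yield exact supporting lines. -/
private lemma support_of_approx (H g : ℝ → ℝ) (L : ℝ) (hL : 0 < L)
    (hmono : ∀ r s : ℝ, 0 ≤ (g r - g s) * (r - s))
    (happrox : ∀ r s : ℝ, H r + g r * (s - r) - (s - r)^2/(2*L) ≤ H s) :
    ∀ r s : ℝ, H r + g r * (s - r) ≤ H s := by
  have ind : ∀ n : ℕ, ∀ r s : ℝ, H r + g r * (s - r) - (s - r)^2/(2*L*2^n) ≤ H s := by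
    intro n
    induction n with
    | zero => intro r s; simpa using happrox r s
    | succ n ih =>
      intro r s
      have h1 := ih r ((r+s)/2)
      have h2 := ih ((r+s)/2) s
      have h3 := hmono ((r+s)/2) r
      have hp : (0:ℝ) < 2^n := by positivity
      have hq : (0:ℝ) < 2*L*2^n := by positivity
      have hq' : (0:ℝ) < 2*L*2^(n+1) := by positivity
      have e1 : ((r+s)/2 - r) = (s-r)/2 := by ring
      have e2 : (s - (r+s)/2) = (s-r)/2 := by ring
      rw [e1] at h1 h3
      rw [e2] at h2
      have e3 : ((s-r)/2)^2/(2*L*2^n) = (s-r)^2/(2*L*2^(n+1)) / 2 := by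
        rw [pow_succ]
        field_simp
        ring
      rw [e3] at h1 h2
      nlinarith [h1, h2, h3]
  intro r s
  by_contra hcon
  push_neg at hcon
  obtain ⟨ε, hε⟩ : ∃ e, e = H r + g r * (s - r) - H s := ⟨_, rfl⟩
  have hε0 : 0 < ε := by rw [hε]; linarith
  obtain ⟨n, hn⟩ := pow_unbounded_of_one_lt ((s-r)^2/(2*L*ε)) (one_lt_two (α := ℝ))
  have hq : (0:ℝ) < 2*L*2^n := by positivity
  have h2 : (s-r)^2 < 2*L*ε*2^n := by
    rw [div_lt_iff₀ (by positivity)] at hn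
    nlinarith [hn]
  have h3 : (s-r)^2/(2*L*2^n) < ε := by
    rw [div_lt_iff₀ hq]
    nlinarith [h2]
  have := ind n r s
  rw [hε] at h3
  linarith

/-- If `f + x²/2 - x²/(2L)` is convex, then `δ - rmin δ / L` is a subgradient of it
at `rmin δ`. -/
private lemma subgrad_of_convex (f rmin : ℝ → ℝ)
    (hsel : ∀ δ : ℝ, ∀ r' : ℝ,
      (δ - rmin δ) ^ 2 / 2 + f (rmin δ) ≤ (δ - r') ^ 2 / 2 + f r')
    (L : ℝ) (hL : 0 < L)
    (hcv : ConvexOn ℝ Set.univ (fun x => f x + x^2/2 - x^2/(2*L))) :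
    ∀ δ s : ℝ, (f (rmin δ) + (rmin δ)^2/2 - (rmin δ)^2/(2*L)) + (δ - rmin δ / L) * (s - rmin δ)
      ≤ f s + s^2/2 - s^2/(2*L) := by
  intro δ s
  have hL' : L ≠ 0 := ne_of_gt hL
  obtain ⟨ρ, hρ⟩ : ∃ x, rmin δ = x := ⟨_, rfl⟩
  rw [hρ]
  have Q : ∀ t : ℝ, (f ρ + ρ^2/2 - ρ^2/(2*L)) + (δ - ρ/L) * (t - ρ) - (t - ρ)^2/(2*L)
      ≤ f t + t^2/2 - t^2/(2*L) := by
    intro t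
    have hk := prox_key f rmin hsel δ t
    rw [hρ] at hk
    have hid : (f ρ + ρ^2/2 - ρ^2/(2*L)) + (δ - ρ/L) * (t - ρ) - (t - ρ)^2/(2*L)
        - (f t + t^2/2 - t^2/(2*L)) = (f ρ + ρ^2/2 - δ * ρ) - (f t + t^2/2 - δ * t) := by
      field_simp
      ring
    linarith [hid.le, hid.ge]
  by_contra hcon
  push_neg at hcon
  obtain ⟨e, he⟩ : ∃ e, e = (f ρ + ρ^2/2 - ρ^2/(2*L)) + (δ - ρ/L) * (s - ρ)
      - (f s + s^2/2 - s^2/(2*L)) := ⟨_, rfl⟩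
  have he0 : 0 < e := by rw [he]; linarith
  have hsρ : s ≠ ρ := by
    intro h
    rw [h] at he
    simp at he
    linarith
  obtain ⟨d, hd⟩ : ∃ d, d = s - ρ := ⟨_, rfl⟩
  have hd0 : d ≠ 0 := by rw [hd]; exact sub_ne_zero.mpr hsρ
  have hd2 : 0 < d^2 := by positivity
  obtain ⟨lam, hlam⟩ : ∃ l, l = min 1 (L * e / d^2) := ⟨_, rfl⟩
  have hlam0 : 0 < lam := by rw [hlam]; exact lt_min one_pos (by positivity)
  have hlam1 : lam ≤ 1 := by rw [hlam]; exact min_le_left _ _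
  have hlam2 : lam ≤ L * e / d^2 := by rw [hlam]; exact min_le_right _ _
  have hcvx := hcv.2 (Set.mem_univ ρ) (Set.mem_univ s) (by linarith : (0:ℝ) ≤ 1 - lam)
    hlam0.le (by ring)
  simp only [smul_eq_mul] at hcvx
  have hQt := Q ((1 - lam) * ρ + lam * s)
  have htρ : (1 - lam) * ρ + lam * s - ρ = lam * d := by rw [hd]; ring
  rw [htρ] at hQt
  have hHs : f s + s^2/2 - s^2/(2*L)
      = (f ρ + ρ^2/2 - ρ^2/(2*L)) + (δ - ρ/L) * d - e := by rw [he, hd]; ring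
  rw [hHs] at hcvx
  have hrhs : (1 - lam) * (f ρ + ρ^2/2 - ρ^2/(2*L))
      + lam * ((f ρ + ρ^2/2 - ρ^2/(2*L)) + (δ - ρ/L) * d - e)
      = (f ρ + ρ^2/2 - ρ^2/(2*L)) + lam * ((δ - ρ/L) * d) - lam * e := by ring
  have hfin : lam * e ≤ (lam * d)^2/(2*L) := by linarith [hcvx, hQt, hrhs.le, hrhs.ge]
  have h5 : e * (2*L) ≤ lam * d^2 := by
    rw [le_div_iff₀ (by positivity : (0:ℝ) < 2*L)] at hfin
    refine le_of_mul_le_mul_left ?_ hlam0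
    linarith [hfin]
  have h6 : lam * d^2 ≤ L * e := by
    calc lam * d^2 ≤ (L * e / d^2) * d^2 :=
          mul_le_mul_of_nonneg_right hlam2 hd2.le
      _ = L * e := div_mul_cancel₀ _ (pow_ne_zero 2 hd0)
  have := mul_pos hL he0
  linarith [h5, h6]

/-- Weak convexity implies Lipschitz continuity of the proximal selection. -/
private lemma prox_lip_of_convex (f rmin : ℝ → ℝ)
    (hsel : ∀ δ : ℝ, ∀ r' : ℝ,
      (δ - rmin δ) ^ 2 / 2 + f (rmin δ) ≤ (δ - r') ^ 2 / 2 + f r')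
    (L : ℝ) (hL : 0 < L)
    (hcv : ConvexOn ℝ Set.univ (fun x => f x + x^2/2 - x^2/(2*L))) :
    ∀ δ δ' : ℝ, |rmin δ - rmin δ'| ≤ L * |δ - δ'| := by
  intro δ δ'
  have h1 := subgrad_of_convex f rmin hsel L hL hcv δ (rmin δ')
  have h2 := subgrad_of_convex f rmin hsel L hL hcv δ' (rmin δ)
  obtain ⟨r, hr⟩ : ∃ x, rmin δ = x := ⟨_, rfl⟩
  obtain ⟨r', hr'⟩ : ∃ x, rmin δ' = x := ⟨_, rfl⟩
  rw [hr, hr'] at h1 h2 ⊢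
  have hL' : L ≠ 0 := ne_of_gt hL
  have hsm : (r - r')^2 ≤ L * ((δ - δ') * (r - r')) := by
    have c1 : (δ - r/L) * (r' - r) + (δ' - r'/L) * (r - r') ≤ 0 := by linarith [h1, h2]
    have c2 : ((δ - r/L) * (r' - r) + (δ' - r'/L) * (r - r')) * L
        = -(L * ((δ - δ') * (r - r')) - (r - r')^2) := by field_simp; ring
    nlinarith [c1, c2.le, c2.ge, hL]
  by_cases hrr : r = r'
  · rw [hrr]; simp; positivity
  · have habs : (δ - δ') * (r - r') ≤ |δ - δ'| * |r - r'| := by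
      rw [← abs_mul]; exact le_abs_self _
    have h3 : |r - r'| * |r - r'| ≤ L * (|δ - δ'| * |r - r'|) := by
      calc |r - r'| * |r - r'| = (r - r')^2 := by rw [← abs_mul, abs_mul_self]; ring
        _ ≤ L * ((δ - δ') * (r - r')) := hsm
        _ ≤ L * (|δ - δ'| * |r - r'|) := by nlinarith [habs, hL]
    have hpos : 0 < |r - r'| := abs_pos.mpr (sub_ne_zero.mpr hrr)
    nlinarith [h3, hpos]

/-- A Lipschitz proximal selection is surjective. -/
private lemma prox_surj (f rmin : ℝ → ℝ)
    (hsel : ∀ δ : ℝ, ∀ r' : ℝ,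
      (δ - rmin δ) ^ 2 / 2 + f (rmin δ) ≤ (δ - r') ^ 2 / 2 + f r')
    (L : ℝ) (hL : 0 < L)
    (hlip : ∀ δ δ' : ℝ, |rmin δ - rmin δ'| ≤ L * |δ - δ'|) :
    ∀ r : ℝ, ∃ d, rmin d = r := by
  have key := prox_key f rmin hsel
  have philow : ∀ s : ℝ, f (rmin 0) + (rmin 0)^2/2 ≤ f s + s^2/2 := by
    intro s
    have := key 0 s
    simpa using this
  have cont : Continuous rmin := by
    have : LipschitzWith (Real.toNNReal L) rmin := by
      apply LipschitzWith.of_dist_le_mul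
      intro a b
      rw [Real.dist_eq, Real.dist_eq, Real.coe_toNNReal L hL.le]
      exact hlip a b
    exact this.continuous
  intro r
  have hup : ∃ d, r ≤ rmin d := by
    by_contra hc
    push_neg at hc
    obtain ⟨C, hC⟩ : ∃ C, C = f (r+1) + (r+1)^2/2 - (f (rmin 0) + (rmin 0)^2/2) := ⟨_, rfl⟩
    obtain ⟨d, hd⟩ : ∃ d, d = max 0 (C + 1) := ⟨_, rfl⟩
    have hd0 : 0 ≤ d := hd ▸ le_max_left _ _
    have hd1 : C + 1 ≤ d := hd ▸ le_max_right _ _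
    have hk := key d (r+1)
    have hlo := philow (rmin d)
    have hstep : d * 1 ≤ d * (r + 1 - rmin d) :=
      mul_le_mul_of_nonneg_left (by linarith [hc d]) hd0
    nlinarith [hk, hlo, hstep, hC.le, hC.ge, hd1]
  have hdown : ∃ d, rmin d ≤ r := by
    by_contra hc
    push_neg at hc
    obtain ⟨C, hC⟩ : ∃ C, C = f (r-1) + (r-1)^2/2 - (f (rmin 0) + (rmin 0)^2/2) := ⟨_, rfl⟩
    obtain ⟨d, hd⟩ : ∃ d, d = min 0 (-C - 1) := ⟨_, rfl⟩
    have hd0 : d ≤ 0 := hd ▸ min_le_left _ _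
    have hd1 : d ≤ -C - 1 := hd ▸ min_le_right _ _
    have hk := key d (r-1)
    have hlo := philow (rmin d)
    have hstep : d * (r - 1 - rmin d) ≥ d * (-1) :=
      mul_le_mul_of_nonpos_left (by linarith [hc d]) hd0
    nlinarith [hk, hlo, hstep, hC.le, hC.ge, hd1]
  obtain ⟨da, hda⟩ := hup
  obtain ⟨db, hdb⟩ := hdown
  have hsub := intermediate_value_uIcc (a := db) (b := da) cont.continuousOn
  have hr : r ∈ Set.uIcc (rmin db) (rmin da) := Set.mem_uIcc.mpr (Or.inl ⟨hdb, hda⟩)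
  obtain ⟨d, _, hd⟩ := hsub hr
  exact ⟨d, hd⟩

/-- Lipschitz continuity of the proximal selection implies weak convexity. -/
private lemma convex_of_prox_lip (f rmin : ℝ → ℝ)
    (hsel : ∀ δ : ℝ, ∀ r' : ℝ,
      (δ - rmin δ) ^ 2 / 2 + f (rmin δ) ≤ (δ - r') ^ 2 / 2 + f r')
    (L : ℝ) (hL : 0 < L)
    (hlip : ∀ δ δ' : ℝ, |rmin δ - rmin δ'| ≤ L * |δ - δ'|) :
    ConvexOn ℝ Set.univ (fun x => f x + x^2/2 - x^2/(2*L)) := by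
  have key := prox_key f rmin hsel
  have hL' : L ≠ 0 := ne_of_gt hL
  have mono : ∀ δ δ' : ℝ, 0 ≤ (δ - δ') * (rmin δ - rmin δ') := by
    intro δ δ'
    have h1 := key δ (rmin δ')
    have h2 := key δ' (rmin δ)
    nlinarith [h1, h2]
  obtain ⟨D, hD⟩ := Classical.axiomOfChoice (prox_surj f rmin hsel L hL hlip)
  have hmono : ∀ r s : ℝ, 0 ≤ ((D r - r/L) - (D s - s/L)) * (r - s) := by
    intro r s
    have h1 : 0 ≤ (D r - D s) * (r - s) := by
      have := mono (D r) (D s)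
      rwa [hD, hD] at this
    have h2 : |r - s| ≤ L * |D r - D s| := by
      have := hlip (D r) (D s)
      rwa [hD, hD] at this
    have h3 : (r - s)^2 ≤ L * ((D r - D s) * (r - s)) := by
      calc (r - s)^2 = |r - s| * |r - s| := by rw [abs_mul_abs_self]; ring
        _ ≤ (L * |D r - D s|) * |r - s| := mul_le_mul_of_nonneg_right h2 (abs_nonneg _)
        _ = L * |(D r - D s) * (r - s)| := by rw [abs_mul]; ring
        _ = L * ((D r - D s) * (r - s)) := by rw [abs_of_nonneg h1]
    have hdiv : (r - s)^2 / L ≤ (D r - D s) * (r - s) := by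
      rw [div_le_iff₀ hL]
      linarith [h3]
    have hid : ((D r - r/L) - (D s - s/L)) * (r - s)
        = (D r - D s) * (r - s) - (r - s)^2/L := by field_simp; ring
    rw [hid]
    linarith [hdiv]
  have happrox : ∀ r s : ℝ, (fun x => f x + x^2/2 - x^2/(2*L)) r
      + (D r - r/L) * (s - r) - (s - r)^2/(2*L) ≤ (fun x => f x + x^2/2 - x^2/(2*L)) s := by
    intro r s
    simp only
    have hk := key (D r) s
    rw [hD] at hk
    have hid : (f r + r^2/2 - r^2/(2*L)) + (D r - r/L) * (s - r) - (s - r)^2/(2*L)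
        - (f s + s^2/2 - s^2/(2*L)) = (f r + r^2/2 - D r * r) - (f s + s^2/2 - D r * s) := by
      field_simp
      ring
    linarith [hid.le, hid.ge]
  exact convexOn_of_support _ (fun r => D r - r/L)
    (support_of_approx _ _ L hL hmono happrox)

/-- Suppose `P_f(δ) ≠ ∅` for all `δ` and `rmin` is a proximal selection.
For `L ∈ (1,∞)`, `rmin` is `L`-Lipschitz iff `f` is `L/(L−1)`-weakly convex; and `rmin`
is `1`-Lipschitz iff `f` is convex. -/
theorem prox_lipschitz_iff_weaklyConvex (f : ℝ → ℝ) (rmin : ℝ → ℝ)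
    (hsel : ∀ δ : ℝ, ∀ r' : ℝ,
      (δ - rmin δ) ^ 2 / 2 + f (rmin δ) ≤ (δ - r') ^ 2 / 2 + f r') :
    (∀ L : ℝ, 1 < L →
      ((∀ δ δ' : ℝ, |rmin δ - rmin δ'| ≤ L * |δ - δ'|) ↔
        ConvexOn ℝ Set.univ (fun r => (L / (L - 1)) * f r + r ^ 2 / 2))) ∧
    ((∀ δ δ' : ℝ, |rmin δ - rmin δ'| ≤ |δ - δ'|) ↔ ConvexOn ℝ Set.univ f) := by
  constructor
  · intro L hL
    have hL0 : (0:ℝ) < L := by linarith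
    have hL1 : (0:ℝ) < L - 1 := by linarith
    have hLne : L ≠ 0 := ne_of_gt hL0
    have hL1ne : L - 1 ≠ 0 := ne_of_gt hL1
    constructor
    · intro hlip
      have h := convex_of_prox_lip f rmin hsel L hL0 hlip
      have h2 := convexOn_const_mul (L/(L-1)) (by positivity) _ h
      have heq : (fun x => (L/(L-1)) * (f x + x^2/2 - x^2/(2*L)))
          = (fun r => (L / (L - 1)) * f r + r ^ 2 / 2) := by
        funext x
        field_simp
        ring
      rw [heq] at h2
      exact h2
    · intro hcv
      have h2 := convexOn_const_mul ((L-1)/L) (by positivity) _ hcv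
      have heq : (fun x => ((L-1)/L) * ((L / (L - 1)) * f x + x ^ 2 / 2))
          = (fun x => f x + x^2/2 - x^2/(2*L)) := by
        funext x
        field_simp
        ring
      rw [heq] at h2
      exact prox_lip_of_convex f rmin hsel L hL0 h2
  · constructor
    · intro hlip
      have h := convex_of_prox_lip f rmin hsel 1 one_pos
        (fun δ δ' => by simpa using hlip δ δ')
      have heq : (fun x : ℝ => f x + x^2/2 - x^2/(2*1)) = f := by
        funext x
        ring
      rwa [heq] at h
    · intro hcv
      have h2 : ConvexOn ℝ Set.univ (fun x : ℝ => f x + x^2/2 - x^2/(2*1)) := by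
        have heq : (fun x : ℝ => f x + x^2/2 - x^2/(2*1)) = f := by
          funext x
          ring
        rwa [heq]
      intro δ δ'
      simpa using prox_lip_of_convex f rmin hsel 1 one_pos h2 δ δ'
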